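/- Let α(t) = α_1 ∧ ... ∧ α_q be a smooth family of decomposable q-forms with dα = α ∧ β and (dβ)^q = α ∧ γ for a q-form γ with dβ ∧ γ = 0, and suppose α̇ = L_X α for a smooth time-dependent vector field X. Then β̇ ∧ (dβ)^q = d(β(X) (dβ)^q), so β̇ ∧ (dβ)^q is exact with primitive β(X)(dβ)^q lying in the ideal of the foliation. -/
import Mathlib


/-- An abstract algebra of (differential) forms on a smooth manifold `M`: a normed
`ℝ`-algebra `Ω` (the algebra of smooth differential forms, normed so that one can
speak of smooth/differentiable one-parameter families), equipped with a grading
predicate `IsDeg n a` ("`a` is a homogeneous form of degree `n`") and an exterior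
differential `d`, a continuous linear map satisfying the graded Leibniz rule,
graded commutativity and `d ∘ d = 0`. -/
class FormAlgebra (Ω : Type*) [NormedRing Ω] [NormedAlgebra ℝ Ω] where
  /-- `IsDeg n a` means that `a` is a homogeneous form of degree `n`. -/
  IsDeg : ℕ → Ω → Prop
  /-- The exterior differential. -/
  d : Ω →L[ℝ] Ω
  isDeg_d : ∀ {n : ℕ} {a : Ω}, IsDeg n a → IsDeg (n + 1) (d a)
  isDeg_mul : ∀ {m n : ℕ} {a b : Ω}, IsDeg m a → IsDeg n b → IsDeg (m + n) (a * b)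
  d_mul : ∀ {m : ℕ} (a b : Ω), IsDeg m a →
    d (a * b) = d a * b + (-1 : ℝ) ^ m • (a * d b)
  deg_mul_comm : ∀ {m n : ℕ} (a b : Ω), IsDeg m a → IsDeg n b →
    a * b = (-1 : ℝ) ^ (m * n) • (b * a)
  d_d : ∀ a : Ω, d (d a) = 0

open FormAlgebra

section Aux

variable {Ω : Type*} [NormedRing Ω] [NormedAlgebra ℝ Ω] [FormAlgebra Ω]

lemma FA_sq_zero {b : Ω} (hb : IsDeg 1 b) : b * b = 0 := by
  have h := deg_mul_comm b b hb hb
  simp only [mul_one, pow_one, neg_smul, one_smul] at h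
  have h2 : (2:ℝ) • (b*b) = 0 := by
    rw [two_smul]
    nth_rewrite 1 [h]
    simp
  calc b*b = ((2:ℝ)⁻¹ * 2) • (b*b) := by norm_num
    _ = (2:ℝ)⁻¹ • ((2:ℝ) • (b*b)) := mul_smul _ _ _
    _ = 0 := by rw [h2, smul_zero]

lemma FA_isDeg_pow {x : Ω} (hx : IsDeg 2 x) : ∀ n, IsDeg (2*(n+1)) (x^(n+1)) := by
  intro n
  induction n with
  | zero => simpa using hx
  | succ n ih =>
    have h : 2*(n+1+1) = 2*(n+1)+2 := by ring
    rw [h, pow_succ]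
    exact isDeg_mul ih hx

lemma FA_d_pow {x : Ω} (hx : IsDeg 2 x) (hdx : d x = 0) :
    ∀ n, d (x^(n+1)) = 0 := by
  intro n
  induction n with
  | zero => simpa using hdx
  | succ n ih =>
    rw [pow_succ, d_mul _ _ (FA_isDeg_pow hx n), ih, hdx]
    simp

end Aux


/-- Let `α(t) = α₁ ∧ ... ∧ α_q` be a smooth family of decomposable `q`-forms with
`dα = α ∧ β` and `(dβ)^q = α ∧ γ` for a `q`-form `γ` with `dβ ∧ γ = 0`, and
suppose `α̇ = L_X α` for a smooth time-dependent vector field `X` (modelled by the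
contraction antiderivations `ι t` and Cartan's formula `L_X = d ∘ i_X + i_X ∘ d`).
Then `β̇ ∧ (dβ)^q = d(β(X) (dβ)^q)`, so `β̇ ∧ (dβ)^q` is exact with primitive
`β(X)(dβ)^q` lying in the ideal of the foliation. -/
theorem statement19 {Ω : Type*} [NormedRing Ω] [NormedAlgebra ℝ Ω] [FormAlgebra Ω]
    (q : ℕ) (hq : 1 ≤ q) (α β γ α' β' : ℝ → Ω) (ι : ℝ → Ω →ₗ[ℝ] Ω)
    (hαd : ∀ t, HasDerivAt α (α' t) t)
    (hβd : ∀ t, HasDerivAt β (β' t) t)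
    (hα : ∀ t, IsDeg q (α t)) (hβ : ∀ t, IsDeg 1 (β t)) (hγ : ∀ t, IsDeg q (γ t))
    (hα' : ∀ t, IsDeg q (α' t)) (hβ' : ∀ t, IsDeg 1 (β' t))
    (heq1 : ∀ t, d (α t) = α t * β t)
    (hpow : ∀ t, (d (β t)) ^ q = α t * γ t)
    (hdβγ : ∀ t, d (β t) * γ t = 0)
    (hιmul : ∀ t (m : ℕ) (a b : Ω), IsDeg m a →
      ι t (a * b) = ι t a * b + (-1 : ℝ) ^ m • (a * ι t b))
    (hιdeg : ∀ t (n : ℕ) (a : Ω), IsDeg (n + 1) a → IsDeg n (ι t a))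
    (hι0 : ∀ t (a : Ω), IsDeg 0 a → ι t a = 0)
    (hLie : ∀ t, α' t = d (ι t (α t)) + ι t (d (α t))) :
    ∀ t, β' t * (d (β t)) ^ q = d (ι t (β t) * (d (β t)) ^ q) := by
  intro t
  obtain ⟨p, rfl⟩ : ∃ p, q = p + 1 := ⟨q - 1, (Nat.succ_pred_eq_of_pos hq).symm⟩
  have hdega : IsDeg (p+1) (α t) := hα t
  have hdegιa : IsDeg p (ι t (α t)) := hιdeg t p _ hdega
  have hdegf : IsDeg 0 (ι t (β t)) := hιdeg t 0 _ (hβ t)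
  have hdegdb : IsDeg 2 (d (β t)) := isDeg_d (hβ t)
  have hdegdf : IsDeg 1 (d (ι t (β t))) := isDeg_d hdegf
  -- differentiate dα = α β
  have hd1 : HasDerivAt (fun s => α s * β s) (d (α' t)) t := by
    have h := (FormAlgebra.d (Ω := Ω)).hasFDerivAt.comp_hasDerivAt t (hαd t)
    simpa [Function.comp_def, heq1] using h
  have h1 : d (α' t) = α' t * β t + α t * β' t := hd1.unique ((hαd t).mul (hβd t))
  -- contraction of dα
  have hιda : ι t (d (α t)) = ι t (α t) * β t + (-1:ℝ)^(p+1) • (α t * ι t (β t)) := by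
    rw [heq1]; exact hιmul t (p+1) _ _ hdega
  have hfb : ι t (β t) * β t = β t * ι t (β t) := by
    simpa using deg_mul_comm (ι t (β t)) (β t) hdegf (hβ t)
  have hE1 : d (α' t) = d (ι t (α t)) * β t + ((-1:ℝ)^p • (ι t (α t) * d (β t))
      + ((-1:ℝ)^(p+1) • (α t * β t * ι t (β t)) + α t * d (ι t (β t)))) := by
    rw [hLie t, map_add, d_d, zero_add, hιda, map_add, map_smul,
      d_mul _ _ hdegιa, d_mul _ _ hdega, heq1]
    rw [smul_add, smul_smul, ← pow_add,
      Even.neg_one_pow (n := (p+1)+(p+1)) ⟨p+1, rfl⟩, one_smul]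
    abel
  have hE2 : α' t * β t = d (ι t (α t)) * β t
      + (-1:ℝ)^(p+1) • (α t * β t * ι t (β t)) := by
    rw [hLie t, hιda]
    simp only [add_mul, smul_mul_assoc, mul_assoc]
    rw [FA_sq_zero (hβ t), mul_zero, zero_add, hfb]
  have hkey : α t * β' t = (-1:ℝ)^p • (ι t (α t) * d (β t)) + α t * d (ι t (β t)) := by
    have h2 := h1
    rw [hE1, hE2] at h2
    have h3 := add_left_cancel (a := d (ι t (α t)) * β t) (by
      calc d (ι t (α t)) * β t + ((-1:ℝ)^p • (ι t (α t) * d (β t))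
            + ((-1:ℝ)^(p+1) • (α t * β t * ι t (β t)) + α t * d (ι t (β t))))
          = d (ι t (α t)) * β t + (-1:ℝ)^(p+1) • (α t * β t * ι t (β t))
            + α t * β' t := h2
        _ = d (ι t (α t)) * β t + ((-1:ℝ)^(p+1) • (α t * β t * ι t (β t))
            + α t * β' t) := by abel)
    -- h3 : (-1)^p • (ια db) + ((-1)^(p+1) • (a b f) + a df) = (-1)^(p+1)•(a b f) + a b'
    have h4 : (-1:ℝ)^(p+1) • (α t * β t * ι t (β t))
        + ((-1:ℝ)^p • (ι t (α t) * d (β t)) + α t * d (ι t (β t)))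
        = (-1:ℝ)^(p+1) • (α t * β t * ι t (β t)) + α t * β' t := by
      rw [← h3]; abel
    exact (add_left_cancel h4).symm
  -- conclude
  have hdP : d ((d (β t))^(p+1)) = 0 := FA_d_pow hdegdb (d_d (β t)) p
  have hcomm1 : β' t * α t = (-1:ℝ)^(p+1) • (α t * β' t) := by
    simpa using deg_mul_comm (β' t) (α t) (hβ' t) hdega
  have hcomm2 : d (ι t (β t)) * α t = (-1:ℝ)^(p+1) • (α t * d (ι t (β t))) := by
    simpa using deg_mul_comm (d (ι t (β t))) (α t) hdegdf hdega
  rw [d_mul _ _ hdegf, hdP, mul_zero, smul_zero, add_zero, hpow t,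
    ← mul_assoc, ← mul_assoc, hcomm1, hcomm2, smul_mul_assoc, smul_mul_assoc]
  congr 1
  rw [hkey]
  simp only [add_mul, smul_mul_assoc, mul_assoc, hdβγ t, mul_zero, smul_zero, zero_add]
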